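/- arXiv:2505.01204 — 2 statements merged into one kernel-verified Lean document; each statement's English description precedes it below -/
import Mathlib

section
/- Let R be a discrete valuation ring with uniformizer ξ and residue field κ = R/(ξ), let k_1 ≥ … ≥ k_n be integers, and let H = { A ∈ GL_n(R) : ξ^{k_i − k_j} ∣ A_{ij} whenever k_i > k_j }. Then the image of H under the reduction map GL_n(R) → GL_n(κ) is exactly the block upper-triangular parabolic subgroup P = { B ∈ GL_n(κ) : B_{ij} = 0 whenever k_i > k_j }. -/
open Matrix

theorem aux_unit {R : Type*} [CommRing R] [IsDomain R] [IsDiscreteValuationRing R]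
    (ξ : R) (hξ : Irreducible ξ) (d : R) (h : IsUnit (Ideal.Quotient.mk (Ideal.span {ξ}) d)) :
    IsUnit d := by
  obtain ⟨u, hu⟩ := h
  obtain ⟨b, hb⟩ := Ideal.Quotient.mk_surjective (↑u⁻¹ : R ⧸ Ideal.span {ξ})
  have h0 : Ideal.Quotient.mk (Ideal.span {ξ}) (d * b - 1) = 0 := by
    rw [map_sub, _root_.map_mul, hb, ← hu, _root_.map_one, Units.mul_inv, sub_self]
  rw [Ideal.Quotient.eq_zero_iff_mem] at h0
  have hmax : d * b - 1 ∈ IsLocalRing.maximalIdeal R :=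
    (IsLocalRing.le_maximalIdeal (by
      simp only [Ne, Ideal.span_singleton_eq_top]
      exact hξ.not_isUnit)) h0
  have hdb : IsUnit (d * b) := by
    by_contra hnu
    have h1 : d * b ∈ IsLocalRing.maximalIdeal R := hnu
    have : (1 : R) ∈ IsLocalRing.maximalIdeal R := by
      have := sub_mem h1 hmax; simpa using this
    exact (IsLocalRing.maximalIdeal.isMaximal R).ne_top
      (Ideal.eq_top_of_isUnit_mem _ this isUnit_one)
  exact isUnit_of_mul_isUnit_left hdb

/-- For `R` a DVR with uniformizer `ξ` and residue field `κ = R/(ξ)`,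
and `k_1 ≥ … ≥ k_n`, the image of
`H = { A ∈ GL_n(R) : ξ^{k_i-k_j} ∣ A_{ij} whenever k_i > k_j }` under reduction
`GL_n(R) → GL_n(κ)` is exactly the parabolic
`P = { B ∈ GL_n(κ) : B_{ij} = 0 whenever k_i > k_j }`. -/
theorem stmt6 {R : Type*} [CommRing R] [IsDomain R] [IsDiscreteValuationRing R]
    (ξ : R) (hξ : Irreducible ξ) (n : ℕ) (k : Fin n → ℤ) (hk : Antitone k) :
    (fun A : Matrix (Fin n) (Fin n) R =>
        A.map (Ideal.Quotient.mk (Ideal.span {ξ}))) ''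
      {A : Matrix (Fin n) (Fin n) R | IsUnit A.det ∧
        ∀ i j, k j < k i → ξ ^ (k i - k j).toNat ∣ A i j} =
    {B : Matrix (Fin n) (Fin n) (R ⧸ Ideal.span {ξ}) | IsUnit B.det ∧
        ∀ i j, k j < k i → B i j = 0} := by
  ext B
  constructor
  · rintro ⟨A, ⟨hdet, hdvd⟩, rfl⟩
    refine ⟨?_, ?_⟩
    · show IsUnit (A.map (Ideal.Quotient.mk (Ideal.span {ξ}))).det
      rw [show (A.map (Ideal.Quotient.mk (Ideal.span {ξ}))) = (Ideal.Quotient.mk (Ideal.span {ξ})).mapMatrix A from rfl, ← RingHom.map_det]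
      exact hdet.map _
    · intro i j hij
      have h1 : 1 ≤ (k i - k j).toNat := by omega
      have : ξ ∣ A i j := (dvd_pow_self ξ (by omega : (k i - k j).toNat ≠ 0)).trans (hdvd i j hij)
      simp only [map_apply]
      rw [Ideal.Quotient.eq_zero_iff_mem, Ideal.mem_span_singleton]
      exact this
  · rintro ⟨hdet, hzero⟩
    set lift : R ⧸ Ideal.span {ξ} → R := Function.surjInv Ideal.Quotient.mk_surjective with hlift
    set A : Matrix (Fin n) (Fin n) R :=
      Matrix.of (fun i j => if k j < k i then 0 else lift (B i j)) with hA
    have hmap : A.map (Ideal.Quotient.mk (Ideal.span {ξ})) = B := by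
      ext i j
      simp only [map_apply, hA, Matrix.of_apply]
      split_ifs with h
      · rw [map_zero, hzero i j h]
      · exact Function.surjInv_eq Ideal.Quotient.mk_surjective (B i j)
    refine ⟨A, ⟨?_, ?_⟩, hmap⟩
    · apply aux_unit ξ hξ
      rw [RingHom.map_det, RingHom.mapMatrix_apply, hmap]
      exact hdet
    · intro i j hij
      simp only [hA, Matrix.of_apply, if_pos hij]
      exact dvd_zero _
end

section
/- Let k_1 ≥ … ≥ k_n be a nonincreasing tuple of integers partitioned into consecutive blocks B_1, …, B_s of sizes r_1, …, r_s, where block B_t consists of an arithmetic progression m_t, m_t − c, m_t − 2c, …, m_t − (r_t − 1)c for a common even integer c ≥ 0. Define a new tuple by replacing, in each block B_t, the progression with m_t + r_t − 1, (m_t + r_t − 1) − (c+2), …, i.e. new top weight m_t + r_t − 1 and new common difference c + 2, and then sorting the result into nonincreasing order to get k'_1 ≥ … ≥ k'_n. If at least one block has size r_t > 1, then (k'_1, …, k'_n) > (k_1, …, k_n) in the lexicographic order. -/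
private lemma stmt14_coe_sum {ι : Type*} (L : List ι) (g : ι → List ℤ) :
    ((L.map fun t => ((g t : List ℤ) : Multiset ℤ)).sum) = (((L.map g).flatten : List ℤ) : Multiset ℤ) := by
  induction L with
  | nil => simp
  | cons a L ih => simp [ih]

private lemma stmt14_lex_append_left {l₁ l₂ : List ℤ} (p : List ℤ)
    (h : List.Lex (· < ·) l₁ l₂) : List.Lex (· < ·) (p ++ l₁) (p ++ l₂) := by
  induction p with
  | nil => exact h
  | cons a p ih => exact List.Lex.cons ih

private lemma stmt14_lex_le_of_perm_sorted {l₁ l₂ : List ℤ} (hp : l₁.Perm l₂)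
    (hs : l₂.Pairwise (· ≥ ·)) : List.Lex (· < ·) l₁ l₂ ∨ l₁ = l₂ := by
  induction l₂ generalizing l₁ with
  | nil => right; exact hp.eq_nil
  | cons b t₂ ih =>
    cases l₁ with
    | nil => exact Or.inl List.Lex.nil
    | cons a t₁ =>
      have ha : a ∈ b :: t₂ := hp.mem_iff.mp List.mem_cons_self
      have hab : a ≤ b := by
        rcases List.mem_cons.mp ha with rfl | ha
        · exact le_refl _
        · exact List.rel_of_pairwise_cons hs ha
      rcases lt_or_eq_of_le hab with h | h
      · exact Or.inl (List.Lex.rel h)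
      · subst h
        rcases ih hp.cons_inv hs.of_cons with h | h
        · exact Or.inl (List.Lex.cons h)
        · right; rw [h]

private lemma stmt14_flatten_lex {ι : Type*} (L : List ι) (o n : ι → List ℤ)
    (h : ∀ t ∈ L, o t = n t ∨ ∃ a b o' n', o t = a :: o' ∧ n t = b :: n' ∧ a < b)
    (hx : ∃ t ∈ L, o t ≠ n t) :
    List.Lex (· < ·) ((L.map o).flatten) ((L.map n).flatten) := by
  induction L with
  | nil => simp at hx
  | cons t L ih =>
    rcases h t (by simp) with he | ⟨a, b, o', n', ho, hn, hab⟩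
    · have hx' : ∃ t ∈ L, o t ≠ n t := by
        rcases hx with ⟨u, hu, hne⟩
        rcases List.mem_cons.mp hu with rfl | hu
        · exact absurd he hne
        · exact ⟨u, hu, hne⟩
      simp only [List.map_cons, List.flatten_cons, he]
      exact stmt14_lex_append_left _ (ih (fun u hu => h u (List.mem_cons_of_mem _ hu)) hx')
    · simp only [List.map_cons, List.flatten_cons, ho, hn, List.cons_append]
      exact List.Lex.rel hab

/-- Let a nonincreasing tuple of integers be given as the
concatenation of `s` consecutive blocks, where block `t` (of size `r t ≥ 1`, top
weight `m t`) is the arithmetic progression `m t, m t - c, …, m t - (r t - 1)c`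
for a common even integer `c ≥ 0`. Replace each block by the progression with
top weight `m t + r t - 1` and common difference `c + 2`, and sort both multisets
into nonincreasing order. If some block has size `> 1`, the new sorted tuple is
strictly larger than the old one in the lexicographic order. -/
theorem stmt14 (s : ℕ) (r : Fin s → ℕ) (m : Fin s → ℤ) (c : ℤ)
    (hc : 0 ≤ c) (hceven : Even c) (hr : ∀ t, 1 ≤ r t)
    (hsorted : ∀ t t' : Fin s, t < t' → m t' ≤ m t - c * ((r t : ℤ) - 1))
    (hbig : ∃ t, 1 < r t) :
    List.Lex (· < ·)
      (Multiset.sort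
        (∑ t : Fin s, Multiset.map (fun j : ℕ => m t - c * (j : ℤ))
          (Multiset.range (r t))) (· ≥ ·))
      (Multiset.sort
        (∑ t : Fin s, Multiset.map
          (fun j : ℕ => (m t + (r t : ℤ) - 1) - (c + 2) * (j : ℤ))
          (Multiset.range (r t))) (· ≥ ·)) := by
  set oldB : Fin s → List ℤ :=
    fun t => (List.range (r t)).map (fun j : ℕ => m t - c * (j : ℤ)) with holdB
  set newB : Fin s → List ℤ :=
    fun t => (List.range (r t)).map
      (fun j : ℕ => (m t + (r t : ℤ) - 1) - (c + 2) * (j : ℤ)) with hnewB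
  set Ol : List ℤ := (((List.finRange s).map oldB).flatten) with hOl
  set Nl : List ℤ := (((List.finRange s).map newB).flatten) with hNl
  -- the multisets are the coercions of the flattened block lists
  have hOm : (∑ t : Fin s, Multiset.map (fun j : ℕ => m t - c * (j : ℤ))
      (Multiset.range (r t))) = (Ol : Multiset ℤ) := by
    rw [Fin.sum_univ_def, hOl, ← stmt14_coe_sum]; rfl
  have hNm : (∑ t : Fin s, Multiset.map
      (fun j : ℕ => (m t + (r t : ℤ) - 1) - (c + 2) * (j : ℤ))
      (Multiset.range (r t))) = (Nl : Multiset ℤ) := by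
    rw [Fin.sum_univ_def, hNl, ← stmt14_coe_sum]; rfl
  -- Ol is sorted nonincreasing
  have hOs : Ol.Pairwise (· ≥ ·) := by
    rw [hOl]
    refine List.pairwise_flatten.mpr ⟨?_, ?_⟩
    · intro l hl
      rcases List.mem_map.mp hl with ⟨t, _, rfl⟩
      refine List.pairwise_map.mpr (List.Pairwise.imp ?_ List.pairwise_lt_range)
      intro i j hij
      have hij' : (i : ℤ) ≤ (j : ℤ) := by exact_mod_cast hij.le
      have := mul_le_mul_of_nonneg_left hij' hc
      simp only [ge_iff_le]
      linarith
    · refine List.pairwise_map.mpr (List.Pairwise.imp ?_ (List.pairwise_lt_finRange _))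
      intro t t' htt' x hx y hy
      rcases List.mem_map.mp hx with ⟨i, hi, rfl⟩
      rcases List.mem_map.mp hy with ⟨j, hj, rfl⟩
      have hi' : (i : ℤ) ≤ (r t : ℤ) - 1 := by
        have : (i : ℤ) < (r t : ℤ) := by exact_mod_cast List.mem_range.mp hi
        linarith
      have hj' : (0 : ℤ) ≤ (j : ℤ) := Int.natCast_nonneg _
      have h1 := hsorted t t' htt'
      have h2 := mul_le_mul_of_nonneg_left hi' hc
      have h3 := mul_nonneg hc hj'
      simp only [ge_iff_le]
      linarith
  -- sort of old multiset is Ol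
  have hsortO : Multiset.sort (∑ t : Fin s,
      Multiset.map (fun j : ℕ => m t - c * (j : ℤ)) (Multiset.range (r t))) (· ≥ ·) = Ol := by
    apply List.Perm.eq_of_pairwise' (Multiset.pairwise_sort _ _) hOs
    rw [← Multiset.coe_eq_coe, Multiset.sort_eq, hOm]
  -- Ol < Nl lexicographically
  have hONlex : List.Lex (· < ·) Ol Nl := by
    refine stmt14_flatten_lex _ _ _ ?_ ?_
    · intro t _
      rcases eq_or_lt_of_le (hr t) with h1 | h1
      · left
        simp only [holdB, hnewB, ← h1]
        norm_num
      · right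
        obtain ⟨k, hk⟩ : ∃ k, r t = k + 1 := ⟨r t - 1, by omega⟩
        have ho : oldB t = (m t - c * ((0:ℕ) : ℤ)) ::
            ((List.range k).map Nat.succ).map (fun j : ℕ => m t - c * (j : ℤ)) := by
          simp only [holdB, hk, List.range_succ_eq_map, List.map_cons]
        have hn : newB t = ((m t + (r t : ℤ) - 1) - (c + 2) * ((0:ℕ) : ℤ)) ::
            ((List.range k).map Nat.succ).map
              (fun j : ℕ => (m t + (r t : ℤ) - 1) - (c + 2) * (j : ℤ)) := by
          simp only [hnewB, hk, List.range_succ_eq_map, List.map_cons]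
        refine ⟨_, _, _, _, ho, hn, ?_⟩
        have : (2 : ℤ) ≤ (r t : ℤ) := by exact_mod_cast h1
        push_cast
        linarith
    · obtain ⟨t, ht⟩ := hbig
      refine ⟨t, List.mem_finRange t, ?_⟩
      obtain ⟨k, hk⟩ : ∃ k, r t = k + 1 := ⟨r t - 1, by omega⟩
      intro hEq
      have h0 : m t - c * ((0:ℕ) : ℤ) = (m t + (r t : ℤ) - 1) - (c + 2) * ((0:ℕ) : ℤ) := by
        have := congrArg (fun l => l.head?) hEq
        rw [holdB, hnewB] at this
        simpa [hk, List.range_succ_eq_map] using this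
      have : (2 : ℤ) ≤ (r t : ℤ) := by exact_mod_cast ht
      push_cast at h0
      linarith
  -- sort of new multiset is lex-≥ Nl
  have hNperm : Nl.Perm (Multiset.sort (∑ t : Fin s, Multiset.map
      (fun j : ℕ => (m t + (r t : ℤ) - 1) - (c + 2) * (j : ℤ)) (Multiset.range (r t))) (· ≥ ·)) := by
    rw [← Multiset.coe_eq_coe, Multiset.sort_eq, hNm]
  rcases stmt14_lex_le_of_perm_sorted hNperm (Multiset.pairwise_sort _ _) with h | h
  · rw [hsortO]
    exact List.lex_trans lt_trans hONlex h
  · rw [hsortO, ← h]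
    exact hONlex
end
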